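/- If A is a symmetric nonnegative real 2-matrix whose spectrum is symmetric (the spectrum of A equals the spectrum of -A as multisets), then A is bipartite. -/

import Mathlib

open Matrix Polynomial

namespace SymmBipAux

variable {n : ℕ}

lemma charpoly_conj (V B : Matrix (Fin n) (Fin n) ℝ)
    (h1 : star V * V = 1) (h2 : V * star V = 1) :
    (V * B * star V).charpoly = B.charpoly := by
  have hscalar : Matrix.scalar (Fin n) (X : ℝ[X])
      = (X : ℝ[X]) • (1 : Matrix (Fin n) (Fin n) ℝ[X]) := by
    ext i j
    by_cases hij : i = j <;>
      simp [hij, Matrix.scalar_apply, Matrix.smul_apply, Matrix.one_apply,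
        Matrix.diagonal_apply]
  have hcm : charmatrix (V * B * star V)
      = (C : ℝ →+* ℝ[X]).mapMatrix V * charmatrix B
        * (C : ℝ →+* ℝ[X]).mapMatrix (star V) := by
    rw [charmatrix, charmatrix, mul_sub, sub_mul]
    congr 1
    · rw [hscalar, mul_smul_comm, mul_one, smul_mul_assoc, ← _root_.map_mul, h2, _root_.map_one]
    · simp only [_root_.map_mul]
  have hdet : det ((C : ℝ →+* ℝ[X]).mapMatrix V) * det ((C : ℝ →+* ℝ[X]).mapMatrix (star V)) = 1 := by
    rw [← det_mul, ← _root_.map_mul ((C : ℝ →+* ℝ[X]).mapMatrix) V (star V), h2,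
      _root_.map_one, det_one]
  rw [Matrix.charpoly, Matrix.charpoly, hcm, det_mul, det_mul,
    mul_comm (det ((C : ℝ →+* ℝ[X]).mapMatrix V)) _, mul_assoc, hdet, mul_one]

lemma charpoly_roots_eigenvalues (A : Matrix (Fin n) (Fin n) ℝ) (hA : A.IsHermitian) :
    A.charpoly.roots = Finset.univ.val.map hA.eigenvalues := by
  have hV1 : star (hA.eigenvectorUnitary : Matrix (Fin n) (Fin n) ℝ) * hA.eigenvectorUnitary = 1 :=
    (Matrix.mem_unitaryGroup_iff').mp (hA.eigenvectorUnitary).2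
  have hV2 : (hA.eigenvectorUnitary : Matrix (Fin n) (Fin n) ℝ) * star hA.eigenvectorUnitary = 1 :=
    (Matrix.mem_unitaryGroup_iff).mp (hA.eigenvectorUnitary).2
  have h := hA.spectral_theorem
  rw [RCLike.ofReal_real_eq_id, Function.id_comp] at h
  have hcp : A.charpoly = (Matrix.diagonal hA.eigenvalues).charpoly := by
    conv_lhs => rw [h]
    exact charpoly_conj _ _ hV1 hV2
  rw [hcp]
  have hcm : charmatrix (Matrix.diagonal hA.eigenvalues)
      = Matrix.diagonal (fun i => (X : ℝ[X]) - C (hA.eigenvalues i)) := by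
    ext i j
    by_cases hij : i = j
    · subst hij; simp [charmatrix_apply_eq]
    · simp [charmatrix_apply_ne _ _ _ hij, Matrix.diagonal_apply_ne _ hij]
  rw [Matrix.charpoly, hcm, det_diagonal]
  have hprod : ∏ i, ((X : ℝ[X]) - C (hA.eigenvalues i))
      = ((Finset.univ.val.map hA.eigenvalues).map (fun a => (X : ℝ[X]) - C a)).prod := by
    rw [Multiset.map_map, Finset.prod_eq_multiset_prod]
    rfl
  rw [hprod, roots_multiset_prod_X_sub_C]

lemma trace_pow (A : Matrix (Fin n) (Fin n) ℝ) (hA : A.IsHermitian) (k : ℕ) :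
    (A ^ k).trace = ∑ i, hA.eigenvalues i ^ k := by
  have hV1 : star (hA.eigenvectorUnitary : Matrix (Fin n) (Fin n) ℝ) * hA.eigenvectorUnitary = 1 :=
    (Matrix.mem_unitaryGroup_iff').mp (hA.eigenvectorUnitary).2
  have h := hA.spectral_theorem
  rw [RCLike.ofReal_real_eq_id, Function.id_comp] at h
  set V := (hA.eigenvectorUnitary : Matrix (Fin n) (Fin n) ℝ) with hVdef
  set D := Matrix.diagonal hA.eigenvalues with hD
  have hV2 : V * star V = 1 :=
    (Matrix.mem_unitaryGroup_iff).mp (hA.eigenvectorUnitary).2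
  have hpow : ∀ m, A ^ m = V * D ^ m * star V := by
    intro m
    induction m with
    | zero => simpa using hV2.symm
    | succ m ih =>
        rw [pow_succ, ih]
        conv_lhs => rw [h, Unitary.conjStarAlgAut_apply]
        rw [pow_succ]
        have e1 : V * D ^ m * star V * (V * D * star V)
            = V * D ^ m * (star V * V) * (D * star V) := by noncomm_ring
        rw [e1, hV1, mul_one]
        noncomm_ring
  rw [hpow k, Matrix.trace_mul_comm, ← Matrix.mul_assoc, hV1, one_mul,
    hD, Matrix.diagonal_pow, Matrix.trace_diagonal]
  simp

lemma pow_entry_nonneg (A : Matrix (Fin n) (Fin n) ℝ) (hnn : ∀ i j, 0 ≤ A i j) :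
    ∀ k i j, 0 ≤ (A ^ k) i j := by
  intro k
  induction k with
  | zero =>
      intro i j
      by_cases hij : i = j <;> simp [hij, Matrix.one_apply]
  | succ k ih =>
      intro i j
      rw [pow_succ, Matrix.mul_apply]
      exact Finset.sum_nonneg fun x _ => mul_nonneg (ih i x) (hnn x j)

lemma walk_pos (A : Matrix (Fin n) (Fin n) ℝ) (hnn : ∀ i j, 0 ≤ A i j)
    (G : SimpleGraph (Fin n)) (hG : ∀ i j, G.Adj i j → A i j ≠ 0)
    {i j : Fin n} (w : G.Walk i j) : 0 < (A ^ w.length) i j := by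
  induction w with
  | nil => simp [Matrix.one_apply]
  | @cons u v w h p ih =>
      rw [SimpleGraph.Walk.length_cons, pow_succ', Matrix.mul_apply]
      apply Finset.sum_pos' (fun x _ => mul_nonneg (hnn u x) (pow_entry_nonneg A hnn _ x w))
      refine ⟨v, Finset.mem_univ v, ?_⟩
      exact mul_pos (lt_of_le_of_ne (hnn u v) (Ne.symm (hG u v h))) ih

end SymmBipAux

open SymmBipAux

/-- If `A` is a symmetric nonnegative real matrix whose spectrum (multiset of complex
eigenvalues, i.e. roots of the characteristic polynomial) is symmetric, then `A` is
bipartite. -/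
theorem symm_nonneg_symmetric_spectrum_bipartite (n : ℕ) (A : Matrix (Fin n) (Fin n) ℝ)
    (hsym : A.IsSymm)
    (hnn : ∀ i j, 0 ≤ A i j)
    (hspec : (A.map (fun a => (a : ℂ))).charpoly.roots
      = ((-A).map (fun a => (a : ℂ))).charpoly.roots) :
    ∃ U : Finset (Fin n),
      (∀ i ∈ U, ∀ j ∈ U, A i j = 0) ∧ (∀ i ∉ U, ∀ j ∉ U, A i j = 0) := by
  classical
  have hA : A.IsHermitian := by
    show Aᴴ = A
    ext i j
    simp only [Matrix.conjTranspose_apply, star_trivial]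
    exact hsym.apply i j
  have hB : (-A).IsHermitian := hA.neg
  -- the characteristic polynomial of A splits over ℝ
  have hsplits : ∀ (M : Matrix (Fin n) (Fin n) ℝ) (hM : M.IsHermitian),
      M.charpoly.Splits := by
    intro M hM
    rw [Polynomial.splits_iff_card_roots, charpoly_roots_eigenvalues M hM]
    simp [Matrix.charpoly_natDegree_eq_dim]
  -- transfer hspec to ℝ
  have hmap : ∀ (M : Matrix (Fin n) (Fin n) ℝ) (hM : M.IsHermitian),
      (M.map (fun a => (a : ℂ))).charpoly.roots
        = M.charpoly.roots.map (algebraMap ℝ ℂ) := by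
    intro M hM
    have : (M.map (fun a => (a : ℂ))) = M.map (algebraMap ℝ ℂ) := rfl
    rw [this, Matrix.charpoly_map, (hsplits M hM).roots_map_of_injective (algebraMap ℝ ℂ).injective]
  rw [hmap A hA, hmap (-A) hB] at hspec
  have hroots : A.charpoly.roots = (-A).charpoly.roots :=
    Multiset.map_injective (algebraMap ℝ ℂ).injective hspec
  rw [charpoly_roots_eigenvalues A hA, charpoly_roots_eigenvalues (-A) hB] at hroots
  -- odd power traces vanish
  have htrodd : ∀ k, Odd k → (A ^ k).trace = 0 := by
    intro k hk
    have h1 := trace_pow A hA k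
    have h2 := trace_pow (-A) hB k
    rw [hk.neg_pow, Matrix.trace_neg] at h2
    have hsum : ∑ i, hA.eigenvalues i ^ k = ∑ i, hB.eigenvalues i ^ k := by
      have hc := congrArg (fun m : Multiset ℝ => (m.map (fun x => x ^ k)).sum) hroots
      simp only [Multiset.map_map, Function.comp] at hc
      rw [Finset.sum_eq_multiset_sum, Finset.sum_eq_multiset_sum]
      exact hc
    linarith
  have hdiag : ∀ k, Odd k → ∀ i, (A ^ k) i i = 0 := by
    intro k hk i
    have ht := htrodd k hk
    have : ∑ j, (A ^ k) j j = 0 := by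
      simpa [Matrix.trace, Matrix.diag] using ht
    exact (Finset.sum_eq_zero_iff_of_nonneg
      (fun j _ => pow_entry_nonneg A hnn k j j)).mp this i (Finset.mem_univ i)
  have hdiag1 : ∀ i, A i i = 0 := by
    intro i
    have := hdiag 1 odd_one i
    simpa using this
  -- the support graph
  set G : SimpleGraph (Fin n) :=
    { Adj := fun i j => i ≠ j ∧ A i j ≠ 0
      symm := by
        refine ⟨fun i j h => ?_⟩
        exact ⟨h.1.symm, by rw [hsym.apply i j]; exact h.2⟩
      loopless := ⟨fun i h => h.1 rfl⟩ } with hGdef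
  have hGadj : ∀ i j, G.Adj i j ↔ i ≠ j ∧ A i j ≠ 0 := fun i j => Iff.rfl
  have hnoodd : ∀ (v : Fin n) (w : G.Walk v v), ¬ Odd w.length := by
    intro v w hodd
    have hpos := walk_pos A hnn G (fun i j h => h.2) w
    rw [hdiag w.length hodd v] at hpos
    exact lt_irrefl 0 hpos
  -- 2-coloring by distance parity
  let r : Fin n → Fin n := fun v => (G.connectedComponentMk v).out
  let c : Fin n → ℕ := fun v => G.dist (r v) v
  have hreach : ∀ v, G.Reachable (r v) v := by
    intro v
    apply SimpleGraph.ConnectedComponent.exact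
    show G.connectedComponentMk ((G.connectedComponentMk v).out) = G.connectedComponentMk v
    exact Quot.out_eq _
  have key : ∀ u v, G.Adj u v → (c u % 2 = 0 ↔ ¬ c v % 2 = 0) := by
    intro u v h
    have hcomp : G.connectedComponentMk u = G.connectedComponentMk v :=
      SimpleGraph.ConnectedComponent.sound h.reachable
    have hr : r u = r v := by
      show Quot.out (G.connectedComponentMk u) = Quot.out (G.connectedComponentMk v)
      rw [hcomp]
    obtain ⟨p, hp⟩ := (hreach u).exists_walk_length_eq_dist
    obtain ⟨q, hq⟩ := (hr ▸ hreach v : G.Reachable (r u) v).exists_walk_length_eq_dist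
    have hw := hnoodd (r u) (p.append (SimpleGraph.Walk.cons h q.reverse))
    rw [SimpleGraph.Walk.length_append, SimpleGraph.Walk.length_cons,
      SimpleGraph.Walk.length_reverse] at hw
    rw [Nat.odd_iff] at hw
    have hcu : c u = p.length := hp.symm
    have hcv : c v = q.length := by
      show G.dist (r v) v = q.length
      rw [← hr]
      exact hq.symm
    rw [hcu, hcv]
    omega
  refine ⟨Finset.univ.filter (fun v => c v % 2 = 0), ?_, ?_⟩
  · intro i hi j hj
    by_contra hne
    rcases eq_or_ne i j with rfl | hij
    · exact hne (hdiag1 i)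
    · have hadj : G.Adj i j := ⟨hij, hne⟩
      have := key i j hadj
      simp only [Finset.mem_filter, Finset.mem_univ, true_and] at hi hj
      tauto
  · intro i hi j hj
    by_contra hne
    rcases eq_or_ne i j with rfl | hij
    · exact hne (hdiag1 i)
    · have hadj : G.Adj i j := ⟨hij, hne⟩
      have := key i j hadj
      simp only [Finset.mem_filter, Finset.mem_univ, true_and] at hi hj
      tauto
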